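/- For the normal mode copula, Kendall's τ = 1 - 4·∫₀¹∫₀¹ (∂C_NM/∂u1)·(∂C_NM/∂u2) du1 du2 equals 32·θ/(κ1²·κ2²·π⁴) if both κ1 and κ2 are odd, and equals 0 otherwise. -/

import Mathlib

open Real intervalIntegral

open Real intervalIntegral

lemma cos_nat_pi (n : ℕ) : Real.cos (n * Real.pi) = (-1)^n := by
  simpa using Real.cos_nat_mul_pi_sub 0 n

lemma sin_deriv (b y : ℝ) : HasDerivAt (fun y => Real.sin (b*y)) (Real.cos (b*y) * b) y :=
  (Real.hasDerivAt_sin _).comp y (by simpa using (hasDerivAt_id y).const_mul b)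

lemma cos_deriv (b y : ℝ) : HasDerivAt (fun y => Real.cos (b*y)) (-Real.sin (b*y) * b) y :=
  (Real.hasDerivAt_cos _).comp y (by simpa using (hasDerivAt_id y).const_mul b)

lemma inner_int (b : ℝ) (hb : b ≠ 0) (x P Q : ℝ) :
    (∫ y in (0:ℝ)..1, (y + P * Real.sin (b*y)) * (x + Q * Real.cos (b*y)))
      = x/2 + x*P*(1 - Real.cos b)/b + Q*(Real.sin b / b + (Real.cos b - 1)/b^2)
        + P*Q*(Real.sin b)^2/(2*b) := by
  have key : ∀ y : ℝ, HasDerivAt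
      (fun y => x*y^2/2 - x*P*Real.cos (b*y)/b
        + Q*(y*Real.sin (b*y)/b + Real.cos (b*y)/b^2) + P*Q*(Real.sin (b*y))^2/(2*b))
      ((y + P * Real.sin (b*y)) * (x + Q * Real.cos (b*y))) y := by
    intro y
    have h1 := ((hasDerivAt_pow 2 y).const_mul x).div_const 2
    have h2 := ((cos_deriv b y).const_mul (x*P)).div_const b
    have h3 := (hasDerivAt_id y).mul (sin_deriv b y)
    have h5 := ((h3.div_const b).add ((cos_deriv b y).div_const (b^2))).const_mul Q
    have h6 := (((sin_deriv b y).pow 2).const_mul (P*Q)).div_const (2*b)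
    have := ((h1.sub h2).add h5).add h6
    refine this.congr_deriv ?_
    simp only [id_eq]
    field_simp
    ring
  rw [intervalIntegral.integral_eq_sub_of_hasDerivAt (fun y _ => key y)
    ((by fun_prop : Continuous fun y => (y + P * Real.sin (b*y)) * (x + Q * Real.cos (b*y))).intervalIntegrable 0 1)]
  norm_num
  ring

lemma outer_int (a : ℝ) (ha : a ≠ 0) (R S : ℝ) :
    (∫ x in (0:ℝ)..1, (x/2 + R * (x * Real.cos (a*x)) + S * Real.sin (a*x)))
      = 1/4 + R * (Real.sin a / a + (Real.cos a - 1)/a^2) + S * (1 - Real.cos a)/a := by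
  have key : ∀ x : ℝ, HasDerivAt
      (fun x => x^2/4 + R*(x*Real.sin (a*x)/a + Real.cos (a*x)/a^2) - S*Real.cos (a*x)/a)
      (x/2 + R * (x * Real.cos (a*x)) + S * Real.sin (a*x)) x := by
    intro x
    have h1 := (hasDerivAt_pow 2 x).div_const 4
    have h3 := (hasDerivAt_id x).mul (sin_deriv a x)
    have h4 := ((h3.div_const a).add ((cos_deriv a x).div_const (a^2))).const_mul R
    have h5 := ((cos_deriv a x).const_mul S).div_const a
    have := (h1.add h4).sub h5
    refine this.congr_deriv ?_
    simp only [id_eq]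
    field_simp
    ring
  rw [intervalIntegral.integral_eq_sub_of_hasDerivAt (fun x _ => key x)
    ((by fun_prop : Continuous fun x => (x/2 + R * (x * Real.cos (a*x)) + S * Real.sin (a*x))).intervalIntegrable 0 1)]
  norm_num
  ring

noncomputable def NM (κ1 κ2 : ℕ) (θ u1 u2 : ℝ) : ℝ :=
  u1 * u2 + θ / (κ1 * κ2 * Real.pi ^ 2) * Real.sin (κ1 * Real.pi * u1) * Real.sin (κ2 * Real.pi * u2)

theorem stmt_13 (κ1 κ2 : ℕ) (hκ1 : 1 ≤ κ1) (hκ2 : 1 ≤ κ2) (θ : ℝ)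
    (hθ : -1 ≤ θ ∧ θ ≤ 1) :
    1 - 4 * ∫ u1 in (0:ℝ)..1, ∫ u2 in (0:ℝ)..1,
        (deriv (fun v => NM κ1 κ2 θ v u2) u1) * (deriv (fun v => NM κ1 κ2 θ u1 v) u2)
      = if Odd κ1 ∧ Odd κ2 then 32 * θ / ((κ1:ℝ) ^ 2 * (κ2:ℝ) ^ 2 * Real.pi ^ 4)
        else 0 := by
  have hπ : Real.pi ≠ 0 := Real.pi_ne_zero
  have hκ1' : (κ1:ℝ) ≠ 0 := Nat.cast_ne_zero.2 (by omega)
  have hκ2' : (κ2:ℝ) ≠ 0 := Nat.cast_ne_zero.2 (by omega)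
  set a : ℝ := (κ1:ℝ) * Real.pi with ha_def
  set b : ℝ := (κ2:ℝ) * Real.pi with hb_def
  set D : ℝ := θ / ((κ1:ℝ) * (κ2:ℝ) * Real.pi ^ 2) with hD_def
  have ha : a ≠ 0 := mul_ne_zero hκ1' hπ
  have hb : b ≠ 0 := mul_ne_zero hκ2' hπ
  have hsa : Real.sin a = 0 := Real.sin_nat_mul_pi κ1
  have hsb : Real.sin b = 0 := Real.sin_nat_mul_pi κ2
  have hca : Real.cos a = (-1)^κ1 := cos_nat_pi κ1
  have hcb : Real.cos b = (-1)^κ2 := cos_nat_pi κ2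
  have hd1 : ∀ u1 u2 : ℝ, deriv (fun v => NM κ1 κ2 θ v u2) u1
      = u2 + (D * (Real.cos (a*u1) * a)) * Real.sin (b*u2) := by
    intro u1 u2
    have H : HasDerivAt (fun v => NM κ1 κ2 θ v u2)
        (1 * u2 + D * (Real.cos (a*u1) * a) * Real.sin (b*u2)) u1 := by
      unfold NM
      exact ((hasDerivAt_id u1).mul_const u2).add
        (((sin_deriv a u1).const_mul D).mul_const (Real.sin (b*u2)))
    simpa using H.deriv
  have hd2 : ∀ u1 u2 : ℝ, deriv (fun v => NM κ1 κ2 θ u1 v) u2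
      = u1 + (D * Real.sin (a*u1) * b) * Real.cos (b*u2) := by
    intro u1 u2
    have H : HasDerivAt (fun v => NM κ1 κ2 θ u1 v)
        (u1 * 1 + (D * Real.sin (a*u1)) * (Real.cos (b*u2) * b)) u2 := by
      unfold NM
      exact ((hasDerivAt_id u2).const_mul u1).add
        ((sin_deriv b u2).const_mul (D * Real.sin (a*u1)))
    rw [H.deriv]; ring
  simp only [hd1, hd2]
  have hinner : ∀ x : ℝ,
      (∫ y in (0:ℝ)..1, (y + (D * (Real.cos (a*x) * a)) * Real.sin (b*y))
          * (x + (D * Real.sin (a*x) * b) * Real.cos (b*y)))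
        = x/2 + (D*a*(1-(-1)^κ2)/b) * (x * Real.cos (a*x))
          + (D*b*((-1)^κ2-1)/b^2) * Real.sin (a*x) := by
    intro x
    rw [inner_int b hb x _ _, hsb, hcb]
    ring
  simp only [hinner]
  rw [outer_int a ha _ _, hsa, hca]
  rcases Nat.even_or_odd κ1 with h1 | h1
  · rw [if_neg (by simp [Nat.not_odd_iff_even.2 h1])]
    rw [h1.neg_one_pow]
    ring
  rcases Nat.even_or_odd κ2 with h2 | h2
  · rw [if_neg (by simp [Nat.not_odd_iff_even.2 h2])]
    rw [h2.neg_one_pow]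
    ring
  rw [if_pos ⟨h1, h2⟩, h1.neg_one_pow, h2.neg_one_pow, hD_def, ha_def, hb_def]
  field_simp
  ring
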